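/- The stem-pruning lemma: let P be a structured process (built inductively from tasks via SEQ, XOR, AND), and let τ be a task occurring exactly once in P. Let P' be obtained from P by replacing every XOR block on the path from the root to τ by its unique child containing τ. Then (1) every execution of P' contains τ, and (2) the executions of P containing τ are exactly the executions of P'. -/

import Mathlib

inductive Interleave {α : Type*} : List α → List α → List α → Prop
  | nil : Interleave [] [] []
  | left {x : α} {a b c : List α} : Interleave a b c → Interleave (x :: a) b (x :: c)
  | right {x : α} {a b c : List α} : Interleave a b c → Interleave a (x :: b) (x :: c)

inductive PB (τ : Type*) where
  | task : τ → PB τ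
  | seq : PB τ → PB τ → PB τ
  | xor : PB τ → PB τ → PB τ
  | and : PB τ → PB τ → PB τ

/-- The list of tasks occurring in a process block. -/
def PB.tasks {τ : Type*} : PB τ → List τ
  | .task t => [t]
  | .seq P Q => P.tasks ++ Q.tasks
  | .xor P Q => P.tasks ++ Q.tasks
  | .and P Q => P.tasks ++ Q.tasks

inductive Exec {τ : Type*} : PB τ → List τ → Prop
  | task (t : τ) : Exec (.task t) [t]
  | seq {B1 B2 : PB τ} {a b : List τ} : Exec B1 a → Exec B2 b → Exec (.seq B1 B2) (a ++ b)
  | xorL {B1 B2 : PB τ} {a : List τ} : Exec B1 a → Exec (.xor B1 B2) a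
  | xorR {B1 B2 : PB τ} {b : List τ} : Exec B2 b → Exec (.xor B1 B2) b
  | and {B1 B2 : PB τ} {a b c : List τ} :
      Exec B1 a → Exec B2 b → Interleave a b c → Exec (.and B1 B2) c

/-- `Prunes t P P'`: `P'` is obtained from `P` by replacing every XOR block on the
path from the root to the (unique) occurrence of the task `t` by its child
containing `t`; all other structure is unchanged. -/
inductive Prunes {τ : Type*} (t : τ) : PB τ → PB τ → Prop
  | task : Prunes t (.task t) (.task t)
  | seqL {P P' Q : PB τ} : t ∈ P.tasks → Prunes t P P' → Prunes t (.seq P Q) (.seq P' Q)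
  | seqR {P Q Q' : PB τ} : t ∈ Q.tasks → Prunes t Q Q' → Prunes t (.seq P Q) (.seq P Q')
  | andL {P P' Q : PB τ} : t ∈ P.tasks → Prunes t P P' → Prunes t (.and P Q) (.and P' Q)
  | andR {P Q Q' : PB τ} : t ∈ Q.tasks → Prunes t Q Q' → Prunes t (.and P Q) (.and P Q')
  | xorL {P P' Q : PB τ} : t ∈ P.tasks → Prunes t P P' → Prunes t (.xor P Q) P'
  | xorR {P Q Q' : PB τ} : t ∈ Q.tasks → Prunes t Q Q' → Prunes t (.xor P Q) Q'


lemma interleave_mem {α : Type*} {a b c : List α} (h : Interleave a b c) {x : α} :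
    x ∈ c ↔ x ∈ a ∨ x ∈ b := by
  induction h with
  | nil => simp
  | left _ ih => simp [ih]; tauto
  | right _ ih => simp [ih]; tauto

lemma exec_subset {τ : Type*} {P : PB τ} {ε : List τ} (h : Exec P ε) :
    ∀ x ∈ ε, x ∈ P.tasks := by
  induction h with
  | task t => simp [PB.tasks]
  | seq _ _ ih1 ih2 => intro x hx; simp [PB.tasks]; rcases List.mem_append.mp hx with h|h
                       · exact Or.inl (ih1 x h)
                       · exact Or.inr (ih2 x h)
  | xorL _ ih => intro x hx; simp [PB.tasks]; exact Or.inl (ih x hx)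
  | xorR _ ih => intro x hx; simp [PB.tasks]; exact Or.inr (ih x hx)
  | and _ _ hi ih1 ih2 =>
      intro x hx
      rcases (interleave_mem hi).mp hx with h|h
      · simp [PB.tasks]; exact Or.inl (ih1 x h)
      · simp [PB.tasks]; exact Or.inr (ih2 x h)

lemma prunes_part1 {τ : Type*} {t : τ} {P P' : PB τ} (hp : Prunes t P P') :
    ∀ ε, Exec P' ε → t ∈ ε := by
  induction hp with
  | task => intro ε he; cases he; simp
  | seqL _ _ ih => intro ε he; cases he with
      | seq h1 h2 => exact List.mem_append.mpr (Or.inl (ih _ h1))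
  | seqR _ _ ih => intro ε he; cases he with
      | seq h1 h2 => exact List.mem_append.mpr (Or.inr (ih _ h2))
  | andL _ _ ih => intro ε he; cases he with
      | and h1 h2 hi => exact (interleave_mem hi).mpr (Or.inl (ih _ h1))
  | andR _ _ ih => intro ε he; cases he with
      | and h1 h2 hi => exact (interleave_mem hi).mpr (Or.inr (ih _ h2))
  | xorL _ _ ih => exact ih
  | xorR _ _ ih => exact ih

lemma prunes_back {τ : Type*} {t : τ} {P P' : PB τ} (hp : Prunes t P P') :
    ∀ ε, Exec P' ε → Exec P ε := by
  induction hp with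
  | task => exact fun ε he => he
  | seqL _ _ ih => intro ε he; cases he with
      | seq h1 h2 => exact Exec.seq (ih _ h1) h2
  | seqR _ _ ih => intro ε he; cases he with
      | seq h1 h2 => exact Exec.seq h1 (ih _ h2)
  | andL _ _ ih => intro ε he; cases he with
      | and h1 h2 hi => exact Exec.and (ih _ h1) h2 hi
  | andR _ _ ih => intro ε he; cases he with
      | and h1 h2 hi => exact Exec.and h1 (ih _ h2) hi
  | xorL _ _ ih => exact fun ε he => Exec.xorL (ih _ he)
  | xorR _ _ ih => exact fun ε he => Exec.xorR (ih _ he)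

lemma prunes_fwd {τ : Type*} {t : τ} {P P' : PB τ} (hp : Prunes t P P')
    (hnd : P.tasks.Nodup) : ∀ ε, Exec P ε → t ∈ ε → Exec P' ε := by
  induction hp with
  | task => exact fun ε he _ => he
  | @seqL A A' B hm _ ih =>
      intro ε he htε
      cases he with
      | seq h1 h2 =>
        have hd := (List.nodup_append.mp hnd).2.2
        rcases List.mem_append.mp htε with h|h
        · exact Exec.seq (ih (List.nodup_append.mp hnd).1 _ h1 h) h2
        · exact absurd (exec_subset h2 t h) (fun hc => hd t hm t hc rfl)
  | @seqR A B B' hm _ ih =>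
      intro ε he htε
      cases he with
      | seq h1 h2 =>
        have hd := (List.nodup_append.mp hnd).2.2
        rcases List.mem_append.mp htε with h|h
        · exact absurd (exec_subset h1 t h) (fun hc => hd t hc t hm rfl)
        · exact Exec.seq h1 (ih (List.nodup_append.mp hnd).2.1 _ h2 h)
  | @andL A A' B hm _ ih =>
      intro ε he htε
      cases he with
      | and h1 h2 hi =>
        have hd := (List.nodup_append.mp hnd).2.2
        rcases (interleave_mem hi).mp htε with h|h
        · exact Exec.and (ih (List.nodup_append.mp hnd).1 _ h1 h) h2 hi
        · exact absurd (exec_subset h2 t h) (fun hc => hd t hm t hc rfl)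
  | @andR A B B' hm _ ih =>
      intro ε he htε
      cases he with
      | and h1 h2 hi =>
        have hd := (List.nodup_append.mp hnd).2.2
        rcases (interleave_mem hi).mp htε with h|h
        · exact absurd (exec_subset h1 t h) (fun hc => hd t hc t hm rfl)
        · exact Exec.and h1 (ih (List.nodup_append.mp hnd).2.1 _ h2 h) hi
  | @xorL A A' B hm _ ih =>
      intro ε he htε
      cases he with
      | xorL h => exact ih (List.nodup_append.mp hnd).1 _ h htε
      | xorR h =>
        have hd := (List.nodup_append.mp hnd).2.2
        exact absurd (exec_subset h t htε) (fun hc => hd t hm t hc rfl)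
  | @xorR A B B' hm _ ih =>
      intro ε he htε
      cases he with
      | xorL h =>
        have hd := (List.nodup_append.mp hnd).2.2
        exact absurd (exec_subset h t htε) (fun hc => hd t hc t hm rfl)
      | xorR h => exact ih (List.nodup_append.mp hnd).2.1 _ h htε

theorem stem_pruning {τ : Type*} (P P' : PB τ) (t : τ)
    (hnd : P.tasks.Nodup) (ht : t ∈ P.tasks) (hp : Prunes t P P') :
    (∀ ε, Exec P' ε → t ∈ ε) ∧
    (∀ ε, (Exec P ε ∧ t ∈ ε) ↔ Exec P' ε) := by
  refine ⟨prunes_part1 hp, fun ε => ⟨fun ⟨he, htε⟩ => prunes_fwd hp hnd ε he htε,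
    fun he => ⟨prunes_back hp ε he, prunes_part1 hp ε he⟩⟩⟩
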